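/- For every 𝔉-stopping time σ, the families of random variables {𝔼(Σ_{i=1}^n Y(τ_i) | 𝓕_σ) : τ ∈ 𝒮^n_σ(δ,𝔉)} and {𝔼(Σ_{i=1}^n Y(τ_i) | 𝓕_σ) : τ ∈ 𝒮^n_σ(δ,𝔉)_disc} are directed upwards: for any two members a, b of the family there exists a member c with max{a, b} ≤ c a.s. -/

import Mathlib

open MeasureTheory Set Filter
open scoped ENNReal NNReal

noncomputable section

variable {Ω : Type*}

/-- `𝒢^ρ`: the smallest filtration making the `[0,∞]`-valued map `ρ` a stopping time,
`𝒢^ρ_t = σ({ρ ≤ s} : s ≤ t)`. -/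
def genFilt (ρ : Ω → ℝ≥0∞) (t : ℝ≥0) : MeasurableSpace Ω :=
  MeasurableSpace.generateFrom {A | ∃ s : ℝ≥0, s ≤ t ∧ A = {ω | ρ ω ≤ (s : ℝ≥0∞)}}

/-- `𝔄^ρ`: the smallest right-continuous filtration containing `𝔄` for which `ρ` is a
stopping time, i.e. the right-continuous regularization of `t ↦ σ(𝒜_t, 𝒢^ρ_t)`. -/
def rcEnlarge (𝔄 : ℝ≥0 → MeasurableSpace Ω) (ρ : Ω → ℝ≥0∞) (t : ℝ≥0) :
    MeasurableSpace Ω :=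
  ⨅ s ∈ Set.Ioi t, (𝔄 s ⊔ genFilt ρ s)

/-- Iterated enlargement `𝔄^{ρ₀,…,ρ_{i-1}}`. -/
def enrichedFilt (𝔄 : ℝ≥0 → MeasurableSpace Ω) (ρ : ℕ → Ω → ℝ≥0∞) :
    ℕ → ℝ≥0 → MeasurableSpace Ω
  | 0 => 𝔄
  | i + 1 => rcEnlarge (enrichedFilt 𝔄 ρ i) (ρ i)

/-- `ρ : Ω → [0,∞]` is a stopping time with respect to the filtration `𝔄 = (𝒜_t)_{t ≥ 0}`. -/
def IsStoppingTimeE (𝔄 : ℝ≥0 → MeasurableSpace Ω) (ρ : Ω → ℝ≥0∞) : Prop :=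
  ∀ t : ℝ≥0, MeasurableSet[𝔄 t] {ω | ρ ω ≤ (t : ℝ≥0∞)}

/-- The σ-algebra `𝒜_ρ` of events prior to the random time `ρ`. -/
def sigmaAt (𝔄 : ℝ≥0 → MeasurableSpace Ω) (ρ : Ω → ℝ≥0∞) : MeasurableSpace Ω :=
  MeasurableSpace.generateFrom
    {A | ∀ t : ℝ≥0, MeasurableSet[𝔄 t] (A ∩ {ω | ρ ω ≤ (t : ℝ≥0∞)})}

/-- Evaluation `Y(τ)` of a process at a `[0,∞]`-valued random time, with the convention
`Y(∞) := limsup_{t→∞} Y(t)`. -/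
def evalAt (Y : ℝ≥0 → Ω → ℝ) (τ : Ω → ℝ≥0∞) (ω : Ω) : ℝ :=
  if τ ω ≠ ∞ then Y (τ ω).toNNReal ω
  else limsup (fun t : ℝ≥0 => Y t ω) atTop

/-- Right-continuity of a filtration. -/
def RightContinuousFilt (𝔄 : ℝ≥0 → MeasurableSpace Ω) : Prop :=
  ∀ t : ℝ≥0, 𝔄 t = ⨅ s ∈ Set.Ioi t, 𝔄 s

variable {m0 : MeasurableSpace Ω}

/-- `Z` is (a version of) the essential supremum of the family of random variables `F`. -/
def IsEssSupFam (μ : Measure Ω) (F : Set (Ω → ℝ)) (Z : Ω → ℝ) : Prop :=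
  (∀ f ∈ F, f ≤ᵐ[μ] Z) ∧ ∀ g : Ω → ℝ, (∀ f ∈ F, f ≤ᵐ[μ] g) → Z ≤ᵐ[μ] g

/-- The set of strategies `𝒮^n_σ(δ, 𝔄)` (0-indexed: `τ 0` is the first exercise `τ₁`,
`δ 0` is the first waiting time `δ₁`). -/
def IsStrategy (𝔄 : ℝ≥0 → MeasurableSpace Ω) (δ : ℕ → Ω → ℝ≥0∞) (n : ℕ)
    (σ : Ω → ℝ≥0∞) (τ : ℕ → Ω → ℝ≥0∞) : Prop :=
  IsStoppingTimeE 𝔄 (τ 0) ∧ (∀ ω, σ ω ≤ τ 0 ω) ∧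
    ∀ i : ℕ, i + 1 < n →
      IsStoppingTimeE (enrichedFilt 𝔄 (fun j ω => τ j ω + δ j ω) (i + 1)) (τ (i + 1)) ∧
      ∀ ω, τ i ω + δ i ω ≤ τ (i + 1) ω

/-- `Σ_{i=1}^n Y(τ_i)`. -/
def rewardSum (Y : ℝ≥0 → Ω → ℝ) (n : ℕ) (τ : ℕ → Ω → ℝ≥0∞) (ω : Ω) : ℝ :=
  ∑ i ∈ Finset.range n, evalAt Y (τ i) ω

/-- The family of random variables whose essential supremum is `Z_n^{δ,𝔄}(σ)`. -/
def gainFam (μ : Measure Ω) (Y : ℝ≥0 → Ω → ℝ) (𝔄 : ℝ≥0 → MeasurableSpace Ω)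
    (δ : ℕ → Ω → ℝ≥0∞) (n : ℕ) (σ : Ω → ℝ≥0∞) : Set (Ω → ℝ) :=
  {g | ∃ τ : ℕ → Ω → ℝ≥0∞, IsStrategy 𝔄 δ n σ τ ∧
    g = μ[rewardSum Y n τ | sigmaAt 𝔄 σ]}

/-- The family of random variables whose essential supremum is `Z_n^{δ,𝔄}(σ)_disc`. -/
def gainFamDisc (μ : Measure Ω) (Y : ℝ≥0 → Ω → ℝ) (𝔄 : ℝ≥0 → MeasurableSpace Ω)
    (δ : ℕ → Ω → ℝ≥0∞) (n : ℕ) (σ : Ω → ℝ≥0∞) : Set (Ω → ℝ) :=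
  {g | ∃ τ : ℕ → Ω → ℝ≥0∞, IsStrategy 𝔄 δ n σ τ ∧ (Set.range (τ 0)).Countable ∧
    g = μ[rewardSum Y n τ | sigmaAt 𝔄 σ]}

/-- The hitting time `ρ_τ^B = inf{t > τ : X(t) ∈ B}` of `B` strictly after the random time `τ`. -/
def hitAfterE (X : ℝ≥0 → Ω → ℝ) (B : Set ℝ) (τ : Ω → ℝ≥0∞) (ω : Ω) : ℝ≥0∞ :=
  ⨅ u ∈ {u : ℝ≥0 | τ ω < (u : ℝ≥0∞) ∧ X u ω ∈ B}, (u : ℝ≥0∞)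

/-- The set of strategies `𝒮^n_σ(B)` of the second model. -/
def IsStrategyB (𝔉 : ℝ≥0 → MeasurableSpace Ω) (X : ℝ≥0 → Ω → ℝ) (B : ℕ → Set ℝ)
    (n : ℕ) (σ : Ω → ℝ≥0∞) (τ : ℕ → Ω → ℝ≥0∞) : Prop :=
  (∀ i < n, IsStoppingTimeE 𝔉 (τ i)) ∧ (∀ ω, σ ω ≤ τ 0 ω) ∧
    ∀ i : ℕ, i + 1 < n → ∀ ω, hitAfterE X (B i) (τ i) ω ≤ τ (i + 1) ω

/-- The family of random variables whose essential supremum is `Z_n^B(σ)` (second model). -/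
def gainFamB (μ : Measure Ω) (Y : ℝ≥0 → Ω → ℝ) (𝔉 : ℝ≥0 → MeasurableSpace Ω)
    (X : ℝ≥0 → Ω → ℝ) (B : ℕ → Set ℝ) (n : ℕ) (σ : Ω → ℝ≥0∞) : Set (Ω → ℝ) :=
  {g | ∃ τ : ℕ → Ω → ℝ≥0∞, IsStrategyB 𝔉 X B n σ τ ∧
    g = μ[rewardSum Y n τ | sigmaAt 𝔉 σ]}


section Aux

lemma genFilt_mono (ρ : Ω → ℝ≥0∞) : Monotone (genFilt (Ω := Ω) ρ) := fun s t hst =>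
  MeasurableSpace.generateFrom_mono (fun A hA => by
    obtain ⟨v, hv, hA⟩ := hA
    exact ⟨v, hv.trans hst, hA⟩)

lemma rcEnlarge_mono (𝔄 : ℝ≥0 → MeasurableSpace Ω) (ρ : Ω → ℝ≥0∞) :
    Monotone (rcEnlarge 𝔄 ρ) := by
  intro s t hst
  exact le_iInf₂ fun u hu => iInf₂_le u (hst.trans_lt hu)

lemma le_rcEnlarge (𝔄 : ℝ≥0 → MeasurableSpace Ω) (h : Monotone 𝔄) (ρ : Ω → ℝ≥0∞) (t : ℝ≥0) :
    𝔄 t ≤ rcEnlarge 𝔄 ρ t :=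
  le_iInf₂ fun u hu => le_trans (h hu.le) le_sup_left

lemma enrichedFilt_mono (𝔄 : ℝ≥0 → MeasurableSpace Ω) (h : Monotone 𝔄) (ρ : ℕ → Ω → ℝ≥0∞)
    (k : ℕ) : Monotone (enrichedFilt 𝔄 ρ k) := by
  cases k with
  | zero => exact h
  | succ k => exact rcEnlarge_mono _ _

lemma le_enrichedFilt (𝔄 : ℝ≥0 → MeasurableSpace Ω) (h : Monotone 𝔄) (ρ : ℕ → Ω → ℝ≥0∞)
    (k : ℕ) (t : ℝ≥0) : 𝔄 t ≤ enrichedFilt 𝔄 ρ k t := by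
  induction k generalizing t with
  | zero => exact le_rfl
  | succ k ih => exact (ih t).trans (le_rcEnlarge _ (enrichedFilt_mono 𝔄 h ρ k) _ t)

/-- Two σ-algebras agree in trace on `A`. -/
def SameOn (A : Set Ω) (m1 m2 : MeasurableSpace Ω) : Prop :=
  ∀ C, MeasurableSet[m1] C → ∃ C', MeasurableSet[m2] C' ∧ A ∩ C = A ∩ C'

lemma sameOn_generateFrom {A : Set Ω} {S : Set (Set Ω)} {m2 : MeasurableSpace Ω}
    (h : ∀ C ∈ S, ∃ C', MeasurableSet[m2] C' ∧ A ∩ C = A ∩ C') :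
    SameOn A (MeasurableSpace.generateFrom S) m2 := by
  intro C hC
  induction hC with
  | basic C hC => exact h C hC
  | empty => exact ⟨∅, MeasurableSet.empty, rfl⟩
  | compl C hC ih =>
    obtain ⟨C', hC', hE⟩ := ih
    refine ⟨C'ᶜ, hC'.compl, ?_⟩
    ext x
    have := Set.ext_iff.mp hE x
    simp only [mem_inter_iff, mem_compl_iff] at *
    tauto
  | iUnion f hf ih =>
    choose g hg hE using ih
    refine ⟨⋃ i, g i, MeasurableSet.iUnion hg, ?_⟩
    rw [inter_iUnion, inter_iUnion]
    exact iUnion_congr hE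

lemma sameOn_sup {A : Set Ω} {m1 m2 g1 g2 : MeasurableSpace Ω}
    (hm : SameOn A m1 m2) (hg : SameOn A g1 g2) : SameOn A (m1 ⊔ g1) (m2 ⊔ g2) := by
  have hgen : m1 ⊔ g1 ≤
      MeasurableSpace.generateFrom {C | MeasurableSet[m1] C ∨ MeasurableSet[g1] C} :=
    sup_le (fun C hC => MeasurableSpace.measurableSet_generateFrom (Or.inl hC))
      (fun C hC => MeasurableSpace.measurableSet_generateFrom (Or.inr hC))
  intro C hC
  refine sameOn_generateFrom (m2 := m2 ⊔ g2) ?_ C (hgen C hC)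
  rintro D (hD | hD)
  · obtain ⟨D', hD', hE⟩ := hm D hD
    exact ⟨D', (le_sup_left : m2 ≤ m2 ⊔ g2) D' hD', hE⟩
  · obtain ⟨D', hD', hE⟩ := hg D hD
    exact ⟨D', (le_sup_right : g2 ≤ m2 ⊔ g2) D' hD', hE⟩

lemma sameOn_genFilt {A : Set Ω} {ρ1 ρ2 : Ω → ℝ≥0∞} (h : ∀ ω ∈ A, ρ1 ω = ρ2 ω) (s : ℝ≥0) :
    SameOn A (genFilt ρ1 s) (genFilt ρ2 s) := by
  apply sameOn_generateFrom
  rintro C ⟨v, hv, rfl⟩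
  refine ⟨{ω | ρ2 ω ≤ (v : ℝ≥0∞)}, MeasurableSpace.measurableSet_generateFrom ⟨v, hv, rfl⟩, ?_⟩
  ext x
  simp only [mem_inter_iff, mem_setOf_eq]
  exact and_congr_right fun hx => by rw [h x hx]

lemma sameOn_biInf {A : Set Ω} {m m' : ℝ≥0 → MeasurableSpace Ω}
    (hm' : Monotone m') (h : ∀ u, SameOn A (m u) (m' u)) (t : ℝ≥0) :
    SameOn A (⨅ u ∈ Set.Ioi t, m u) (⨅ u ∈ Set.Ioi t, m' u) := by
  intro C hC
  have hCu : ∀ u, u ∈ Set.Ioi t → MeasurableSet[m u] C := by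
    intro u hu
    exact (iInf₂_le (f := fun u _ => m u) u hu : (⨅ u ∈ Set.Ioi t, m u) ≤ m u) C hC
  set u : ℕ → ℝ≥0 := fun k => t + ((k : ℝ≥0) + 1)⁻¹ with hu_def
  have hut : ∀ k, u k ∈ Set.Ioi t := by
    intro k
    simp only [hu_def, Set.mem_Ioi]
    exact lt_add_of_pos_right t (by positivity)
  have hu_anti : ∀ j k : ℕ, j ≤ k → u k ≤ u j := by
    intro j k hjk
    apply add_le_add_right
    apply inv_anti₀ (by positivity)
    exact add_le_add_left (by exact_mod_cast hjk) 1
  choose C' hC' hE using fun k => h (u k) C (hCu (u k) (hut k))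
  refine ⟨⋂ j, ⋃ k, C' (j + k), ?_, ?_⟩
  · rw [MeasurableSpace.measurableSet_iInf]
    intro v
    rw [MeasurableSpace.measurableSet_iInf]
    intro hv
    -- find j0 with u j0 ≤ v
    obtain ⟨j0, hj0⟩ : ∃ j0 : ℕ, u j0 ≤ v := by
      have hvt : 0 < v - t := tsub_pos_of_lt hv
      obtain ⟨k, hk⟩ := exists_nat_gt ((v - t)⁻¹ : ℝ≥0)
      refine ⟨k, ?_⟩
      have h1 : ((k : ℝ≥0) + 1)⁻¹ ≤ v - t := by
        have h2 : (v - t)⁻¹ ≤ (k : ℝ≥0) + 1 := hk.le.trans (self_le_add_right _ 1)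
        have := inv_anti₀ (inv_pos.2 hvt) h2
        rwa [inv_inv] at this
      calc u k = t + ((k : ℝ≥0) + 1)⁻¹ := rfl
        _ ≤ t + (v - t) := add_le_add_right h1 t
        _ = v := add_tsub_cancel_of_le hv.le
    have hsub : (⋂ j, ⋃ k, C' (j + k)) = ⋂ j, ⋃ k, C' (j0 + j + k) := by
      apply Set.Subset.antisymm
      · exact fun x hx => Set.mem_iInter.2 fun j => Set.mem_iInter.1 hx (j0 + j)
      · intro x hx
        apply Set.mem_iInter.2
        intro j
        obtain ⟨k, hk⟩ := Set.mem_iUnion.1 (Set.mem_iInter.1 hx j)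
        exact Set.mem_iUnion.2 ⟨j0 + k, by rw [show j + (j0 + k) = j0 + j + k by omega]; exact hk⟩
    rw [hsub]
    have : ∀ j, MeasurableSet[m' (u j0)] (⋃ k, C' (j0 + j + k)) := by
      intro j
      apply MeasurableSet.iUnion
      intro k
      exact hm' (hu_anti j0 (j0 + j + k) (by omega)) _ (hC' (j0 + j + k))
    exact hm' hj0 _ (MeasurableSet.iInter this)
  · ext x
    simp only [mem_inter_iff, Set.mem_iInter, Set.mem_iUnion]
    constructor
    · rintro ⟨hx, hxC⟩
      refine ⟨hx, fun j => ⟨0, ?_⟩⟩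
      have hmem : x ∈ A ∩ C' (j + 0) := by rw [← hE]; exact ⟨hx, hxC⟩
      exact hmem.2
    · rintro ⟨hx, hC'x⟩
      obtain ⟨k, hk⟩ := hC'x 0
      have hmem : x ∈ A ∩ C' (0 + k) := ⟨hx, hk⟩
      rw [← hE] at hmem
      exact ⟨hx, hmem.2⟩

end Aux

section Aux2

lemma sameOn_enrichedFilt {A : Set Ω} (𝔉 : ℝ≥0 → MeasurableSpace Ω) (hmono : Monotone 𝔉)
    {ρ1 ρ2 : ℕ → Ω → ℝ≥0∞} (h : ∀ j ω, ω ∈ A → ρ1 j ω = ρ2 j ω) (k : ℕ) (s : ℝ≥0) :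
    SameOn A (enrichedFilt 𝔉 ρ1 k s) (enrichedFilt 𝔉 ρ2 k s) := by
  induction k generalizing s with
  | zero => exact fun C hC => ⟨C, hC, rfl⟩
  | succ k ih =>
    show SameOn A (rcEnlarge (enrichedFilt 𝔉 ρ1 k) (ρ1 k) s)
      (rcEnlarge (enrichedFilt 𝔉 ρ2 k) (ρ2 k) s)
    unfold rcEnlarge
    apply sameOn_biInf
    · intro a b hab
      exact sup_le_sup (enrichedFilt_mono 𝔉 hmono ρ2 k hab) (genFilt_mono (ρ2 k) hab)
    · intro u
      exact sameOn_sup (ih u) (sameOn_genFilt (fun ω hω => h k ω hω) u)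

lemma strategy_le {𝔄 : ℝ≥0 → MeasurableSpace Ω} {δ : ℕ → Ω → ℝ≥0∞} {n : ℕ}
    {σ : Ω → ℝ≥0∞} {τ : ℕ → Ω → ℝ≥0∞} (hτ : IsStrategy 𝔄 δ n σ τ) :
    ∀ i, i < n → ∀ ω, σ ω ≤ τ i ω := by
  intro i
  induction i with
  | zero => exact fun _ ω => hτ.2.1 ω
  | succ i ih =>
    intro hi ω
    exact ((ih (Nat.lt_of_succ_lt hi) ω).trans le_self_add).trans ((hτ.2.2 i hi).2 ω)

lemma sigmaAt_inter {𝔉 : ℝ≥0 → MeasurableSpace Ω} {σ : Ω → ℝ≥0∞} (hσ : IsStoppingTimeE 𝔉 σ)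
    {A : Set Ω} (hA : MeasurableSet[sigmaAt 𝔉 σ] A) (t : ℝ≥0) :
    MeasurableSet[𝔉 t] (A ∩ {ω | σ ω ≤ (t : ℝ≥0∞)}) := by
  let m' : MeasurableSpace Ω :=
    { MeasurableSet' := fun A => ∀ t : ℝ≥0, MeasurableSet[𝔉 t] (A ∩ {ω | σ ω ≤ (t : ℝ≥0∞)})
      measurableSet_empty := fun t => by simp
      measurableSet_compl := by
        intro B hB t
        have : Bᶜ ∩ {ω | σ ω ≤ (t : ℝ≥0∞)} =
            {ω | σ ω ≤ (t : ℝ≥0∞)} \ (B ∩ {ω | σ ω ≤ (t : ℝ≥0∞)}) := by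
          ext x; simp [mem_diff]; tauto
        rw [this]
        exact (hσ t).diff (hB t)
      measurableSet_iUnion := by
        intro f hf t
        rw [Set.iUnion_inter]
        exact MeasurableSet.iUnion fun i => hf i t }
  have hle : sigmaAt 𝔉 σ ≤ m' := MeasurableSpace.generateFrom_le fun B hB => hB
  exact hle A hA t

open scoped Classical in
lemma combine_isStrategy
    {𝔉 : ℝ≥0 → MeasurableSpace Ω} (hmono : Monotone 𝔉) {n : ℕ} {σ : Ω → ℝ≥0∞}
    (hσ : IsStoppingTimeE 𝔉 σ)
    {δ : ℕ → Ω → ℝ≥0∞} {τ τ' : ℕ → Ω → ℝ≥0∞}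
    (hτ : IsStrategy 𝔉 δ n σ τ) (hτ' : IsStrategy 𝔉 δ n σ τ')
    {A : Set Ω} (hA : MeasurableSet[sigmaAt 𝔉 σ] A) :
    IsStrategy 𝔉 δ n σ (fun i ω => if ω ∈ A then τ' i ω else τ i ω) := by
  classical
  set ρ : ℕ → Ω → ℝ≥0∞ := fun i ω => if ω ∈ A then τ' i ω else τ i ω with hρ
  refine ⟨?_, ?_, ?_⟩
  · -- ρ 0 is an 𝔉-stopping time
    intro t
    have hset : {ω | ρ 0 ω ≤ (t : ℝ≥0∞)} =
        ((A ∩ {ω | σ ω ≤ (t : ℝ≥0∞)}) ∩ {ω | τ' 0 ω ≤ (t : ℝ≥0∞)}) ∪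
        ((Aᶜ ∩ {ω | σ ω ≤ (t : ℝ≥0∞)}) ∩ {ω | τ 0 ω ≤ (t : ℝ≥0∞)}) := by
      ext ω
      by_cases hω : ω ∈ A
      · simp only [hρ, mem_setOf_eq, if_pos hω, mem_union, mem_inter_iff, mem_compl_iff]
        constructor
        · intro hle; exact Or.inl ⟨⟨hω, (hτ'.2.1 ω).trans hle⟩, hle⟩
        · rintro (⟨_, hle⟩ | ⟨⟨hc, _⟩, _⟩)
          · exact hle
          · exact absurd hω hc
      · simp only [hρ, mem_setOf_eq, if_neg hω, mem_union, mem_inter_iff, mem_compl_iff]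
        constructor
        · intro hle; exact Or.inr ⟨⟨hω, (hτ.2.1 ω).trans hle⟩, hle⟩
        · rintro (⟨⟨hc, _⟩, _⟩ | ⟨_, hle⟩)
          · exact absurd hc hω
          · exact hle
    rw [hset]
    exact ((sigmaAt_inter hσ hA t).inter (hτ'.1 t)).union
      ((sigmaAt_inter hσ hA.compl t).inter (hτ.1 t))
  · intro ω
    by_cases hω : ω ∈ A
    · simpa [hρ, if_pos hω] using hτ'.2.1 ω
    · simpa [hρ, if_neg hω] using hτ.2.1 ω
  · intro i hi
    constructor
    · -- stopping time property in the enriched filtration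
      intro t
      obtain ⟨C', hC', hEC'⟩ :=
        sameOn_enrichedFilt (A := A) 𝔉 hmono
          (ρ1 := fun j ω => τ' j ω + δ j ω) (ρ2 := fun j ω => ρ j ω + δ j ω)
          (fun j ω hω => by simp [hρ, if_pos hω]) (i + 1) t
          {ω | τ' (i + 1) ω ≤ (t : ℝ≥0∞)} ((hτ'.2.2 i hi).1 t)
      obtain ⟨C'', hC'', hEC''⟩ :=
        sameOn_enrichedFilt 𝔉 hmono (A := Aᶜ)
          (ρ1 := fun j ω => τ j ω + δ j ω) (ρ2 := fun j ω => ρ j ω + δ j ω)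
          (fun j ω hω => by simp [hρ, if_neg hω]) (i + 1) t
          {ω | τ (i + 1) ω ≤ (t : ℝ≥0∞)} ((hτ.2.2 i hi).1 t)
      have hσle' : ∀ ω, σ ω ≤ τ' (i + 1) ω := strategy_le hτ' (i + 1) hi
      have hσle : ∀ ω, σ ω ≤ τ (i + 1) ω := strategy_le hτ (i + 1) hi
      have hset : {ω | ρ (i + 1) ω ≤ (t : ℝ≥0∞)} =
          ((A ∩ {ω | σ ω ≤ (t : ℝ≥0∞)}) ∩ C') ∪
          ((Aᶜ ∩ {ω | σ ω ≤ (t : ℝ≥0∞)}) ∩ C'') := by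
        ext ω
        by_cases hω : ω ∈ A
        · have hmemC' : ω ∈ C' ↔ τ' (i + 1) ω ≤ (t : ℝ≥0∞) := by
            have := Set.ext_iff.mp hEC' ω
            simp only [mem_inter_iff, mem_setOf_eq] at this
            tauto
          simp only [hρ, mem_setOf_eq, if_pos hω, mem_union, mem_inter_iff, mem_compl_iff]
          constructor
          · intro hle
            exact Or.inl ⟨⟨hω, (hσle' ω).trans hle⟩, hmemC'.2 hle⟩
          · rintro (⟨_, hc⟩ | ⟨⟨hc, _⟩, _⟩)
            · exact hmemC'.1 hc
            · exact absurd hω hc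
        · have hmemC'' : ω ∈ C'' ↔ τ (i + 1) ω ≤ (t : ℝ≥0∞) := by
            have := Set.ext_iff.mp hEC'' ω
            simp only [mem_inter_iff, mem_setOf_eq, mem_compl_iff] at this
            tauto
          simp only [hρ, mem_setOf_eq, if_neg hω, mem_union, mem_inter_iff, mem_compl_iff]
          constructor
          · intro hle
            exact Or.inr ⟨⟨hω, (hσle ω).trans hle⟩, hmemC''.2 hle⟩
          · rintro (⟨⟨hc, _⟩, _⟩ | ⟨_, hc⟩)
            · exact absurd hc hω
            · exact hmemC''.1 hc
      rw [hset]
      have hF : ∀ B : Set Ω, MeasurableSet[𝔉 t] B →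
          MeasurableSet[enrichedFilt 𝔉 (fun j ω => ρ j ω + δ j ω) (i + 1) t] B :=
        fun B hB => le_enrichedFilt 𝔉 hmono _ (i + 1) t B hB
      exact ((hF _ (sigmaAt_inter hσ hA t)).inter hC').union
        ((hF _ (sigmaAt_inter hσ hA.compl t)).inter hC'')
    · intro ω
      by_cases hω : ω ∈ A
      · simpa [hρ, if_pos hω] using (hτ'.2.2 i hi).2 ω
      · simpa [hρ, if_neg hω] using (hτ.2.2 i hi).2 ω

end Aux2

section Aux3

lemma evalAt_nonneg {Y : ℝ≥0 → Ω → ℝ} (hY : ∀ t ω, 0 ≤ Y t ω) (τ : Ω → ℝ≥0∞) (ω : Ω) :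
    0 ≤ evalAt Y τ ω := by
  unfold evalAt
  split_ifs with h
  · exact hY _ ω
  · by_cases hb : IsBoundedUnder (· ≤ ·) atTop (fun t : ℝ≥0 => Y t ω)
    · exact le_limsup_of_frequently_le (Frequently.of_forall fun t => hY t ω) hb
    · rw [limsup_eq]
      have hempty : {a : ℝ | ∀ᶠ t : ℝ≥0 in atTop, Y t ω ≤ a} = ∅ :=
        Set.eq_empty_of_forall_notMem fun a ha => hb ⟨a, eventually_map.2 ha⟩
      rw [hempty, Real.sInf_empty]

lemma rewardSum_nonneg {Y : ℝ≥0 → Ω → ℝ} (hY : ∀ t ω, 0 ≤ Y t ω) (n : ℕ)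
    (τ : ℕ → Ω → ℝ≥0∞) (ω : Ω) : 0 ≤ rewardSum Y n τ ω :=
  Finset.sum_nonneg fun i _ => evalAt_nonneg hY (τ i) ω

open scoped Classical in
lemma key_combine {m0 : MeasurableSpace Ω} (μ : Measure Ω) [IsProbabilityMeasure μ]
    (𝔉 : ℝ≥0 → MeasurableSpace Ω) (hmono : Monotone 𝔉)
    (Y : ℝ≥0 → Ω → ℝ) (hYpos : ∀ t ω, 0 ≤ Y t ω)
    {n : ℕ} {σ : Ω → ℝ≥0∞} (hσ : IsStoppingTimeE 𝔉 σ) {δ : ℕ → Ω → ℝ≥0∞}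
    {τ τ' : ℕ → Ω → ℝ≥0∞} (hτ : IsStrategy 𝔉 δ n σ τ) (hτ' : IsStrategy 𝔉 δ n σ τ') :
    ∃ ρ : ℕ → Ω → ℝ≥0∞, IsStrategy 𝔉 δ n σ ρ ∧
      (Set.range (ρ 0) ⊆ Set.range (τ 0) ∪ Set.range (τ' 0)) ∧
      μ[rewardSum Y n τ|sigmaAt 𝔉 σ] ≤ᵐ[μ] μ[rewardSum Y n ρ|sigmaAt 𝔉 σ] ∧
      μ[rewardSum Y n τ'|sigmaAt 𝔉 σ] ≤ᵐ[μ] μ[rewardSum Y n ρ|sigmaAt 𝔉 σ] := by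
  have hpos : ∀ ρ : ℕ → Ω → ℝ≥0∞, (0 : Ω → ℝ) ≤ᵐ[μ] rewardSum Y n ρ := fun ρ =>
    Filter.Eventually.of_forall fun ω => rewardSum_nonneg hYpos n ρ ω
  by_cases hle : sigmaAt 𝔉 σ ≤ m0
  swap
  · refine ⟨τ, hτ, Set.subset_union_left, ?_, ?_⟩ <;>
      · simp only [condExp_of_not_le hle]
        exact EventuallyLE.refl _ _
  by_cases h1 : Integrable (rewardSum Y n τ) μ
  swap
  · refine ⟨τ', hτ', Set.subset_union_right, ?_, EventuallyLE.refl _ _⟩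
    rw [condExp_of_not_integrable h1]
    exact condExp_nonneg (hpos τ')
  by_cases h2 : Integrable (rewardSum Y n τ') μ
  swap
  · refine ⟨τ, hτ, Set.subset_union_left, EventuallyLE.refl _ _, ?_⟩
    rw [condExp_of_not_integrable h2]
    exact condExp_nonneg (hpos τ)
  set a := μ[rewardSum Y n τ|sigmaAt 𝔉 σ] with ha
  set b := μ[rewardSum Y n τ'|sigmaAt 𝔉 σ] with hb
  set A := {ω | a ω ≤ b ω} with hA
  have hAmeas𝒢 : MeasurableSet[sigmaAt 𝔉 σ] A :=
    measurableSet_le stronglyMeasurable_condExp.measurable stronglyMeasurable_condExp.measurable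
  have hAmeas : MeasurableSet[m0] A := hle A hAmeas𝒢
  set ρ : ℕ → Ω → ℝ≥0∞ := fun i ω => if ω ∈ A then τ' i ω else τ i ω with hρ
  have hsum : rewardSum Y n ρ =
      A.indicator (rewardSum Y n τ') + Aᶜ.indicator (rewardSum Y n τ) := by
    funext ω
    by_cases hω : ω ∈ A
    · simp only [Pi.add_apply, Set.indicator_of_mem hω,
        Set.indicator_of_notMem (by simpa using hω : ω ∉ Aᶜ), add_zero]
      unfold rewardSum
      exact Finset.sum_congr rfl fun i _ => by simp [evalAt, hρ, hω]
    · simp only [Pi.add_apply, Set.indicator_of_notMem hω,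
        Set.indicator_of_mem (by simpa using hω : ω ∈ Aᶜ), zero_add]
      unfold rewardSum
      exact Finset.sum_congr rfl fun i _ => by simp [evalAt, hρ, hω]
  have hc : μ[rewardSum Y n ρ|sigmaAt 𝔉 σ] =ᵐ[μ] A.indicator b + Aᶜ.indicator a := by
    calc μ[rewardSum Y n ρ|sigmaAt 𝔉 σ]
        = μ[A.indicator (rewardSum Y n τ') + Aᶜ.indicator (rewardSum Y n τ)|sigmaAt 𝔉 σ] := by
          rw [hsum]
      _ =ᵐ[μ] μ[A.indicator (rewardSum Y n τ')|sigmaAt 𝔉 σ] + μ[Aᶜ.indicator (rewardSum Y n τ)|sigmaAt 𝔉 σ] :=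
          condExp_add (h2.indicator hAmeas) (h1.indicator hAmeas.compl) _
      _ =ᵐ[μ] A.indicator b + Aᶜ.indicator a :=
          EventuallyEq.add (condExp_indicator h2 hAmeas𝒢) (condExp_indicator h1 hAmeas𝒢.compl)
  refine ⟨ρ, combine_isStrategy hmono hσ hτ hτ' hAmeas𝒢, ?_, ?_, ?_⟩
  · rintro x ⟨ω, rfl⟩
    by_cases hω : ω ∈ A
    · exact Or.inr ⟨ω, by simp [hρ, hω]⟩
    · exact Or.inl ⟨ω, by simp [hρ, hω]⟩
  · filter_upwards [hc] with ω hω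
    rw [hω]
    by_cases hωA : ω ∈ A
    · simp only [Pi.add_apply, Set.indicator_of_mem hωA,
        Set.indicator_of_notMem (by simpa using hωA : ω ∉ Aᶜ), add_zero]
      exact hωA
    · simp only [Pi.add_apply, Set.indicator_of_notMem hωA,
        Set.indicator_of_mem (by simpa using hωA : ω ∈ Aᶜ), zero_add, le_refl]
  · filter_upwards [hc] with ω hω
    rw [hω]
    by_cases hωA : ω ∈ A
    · simp only [Pi.add_apply, Set.indicator_of_mem hωA,
        Set.indicator_of_notMem (by simpa using hωA : ω ∉ Aᶜ), add_zero, le_refl]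
    · simp only [Pi.add_apply, Set.indicator_of_notMem hωA,
        Set.indicator_of_mem (by simpa using hωA : ω ∈ Aᶜ), zero_add]
      exact (lt_of_not_ge hωA).le

end Aux3

/-- The families
`{𝔼(Σ_{i=1}^n Y(τ_i) | 𝓕_σ) : τ ∈ 𝒮^n_σ(δ,𝔉)}` and
`{𝔼(Σ_{i=1}^n Y(τ_i) | 𝓕_σ) : τ ∈ 𝒮^n_σ(δ,𝔉)_disc}` are directed upwards. -/
theorem gainFam_directed_upwards
    (μ : Measure Ω) [IsProbabilityMeasure μ]
    (𝔉 : ℝ≥0 → MeasurableSpace Ω) (hle : ∀ t, 𝔉 t ≤ m0) (hmono : Monotone 𝔉)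
    (hrc : RightContinuousFilt 𝔉)
    (hnull : ∀ A : Set Ω, μ A = 0 → MeasurableSet[𝔉 0] A)
    (Y : ℝ≥0 → Ω → ℝ) (hadapt : ∀ t, Measurable[𝔉 t] (Y t))
    (hYpos : ∀ t ω, 0 ≤ Y t ω)
    (hYrc : ∀ ω t, ContinuousWithinAt (fun s => Y s ω) (Set.Ici t) t)
    (hYint : ∫⁻ ω, ⨆ t : ℝ≥0, ENNReal.ofReal (Y t ω) ∂μ < ∞)
    (n : ℕ) (hn : 2 ≤ n) (δ : ℕ → Ω → ℝ≥0∞)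
    (hδfin : ∀ i, i + 1 < n → ∀ᵐ ω ∂μ, δ i ω < ∞)
    (σ : Ω → ℝ≥0∞) (hσ : IsStoppingTimeE 𝔉 σ) :
    (∀ a ∈ gainFam μ Y 𝔉 δ n σ, ∀ b ∈ gainFam μ Y 𝔉 δ n σ,
      ∃ c ∈ gainFam μ Y 𝔉 δ n σ, a ≤ᵐ[μ] c ∧ b ≤ᵐ[μ] c) ∧
    (∀ a ∈ gainFamDisc μ Y 𝔉 δ n σ, ∀ b ∈ gainFamDisc μ Y 𝔉 δ n σ,
      ∃ c ∈ gainFamDisc μ Y 𝔉 δ n σ, a ≤ᵐ[μ] c ∧ b ≤ᵐ[μ] c) := by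
  constructor
  · rintro a ⟨τ, hτ, rfl⟩ b ⟨τ', hτ', rfl⟩
    obtain ⟨ρ, hρ, -, h1, h2⟩ := key_combine μ 𝔉 hmono Y hYpos hσ hτ hτ'
    exact ⟨_, ⟨ρ, hρ, rfl⟩, h1, h2⟩
  · rintro a ⟨τ, hτ, hcτ, rfl⟩ b ⟨τ', hτ', hcτ', rfl⟩
    obtain ⟨ρ, hρ, hrange, h1, h2⟩ := key_combine μ 𝔉 hmono Y hYpos hσ hτ hτ'
    exact ⟨_, ⟨ρ, hρ, (hcτ.union hcτ').mono hrange, rfl⟩, h1, h2⟩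

end
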